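/- Under the k-IS abstract properties (Self-inclusion, Containment, Immediacy, Output size with parameter k < n−1), if every view has cardinality at least n−k and the minimum view min_view has cardinality ℓ ≥ n−k ≥ 2, then among any n−1 of the defined views, at least one equals min_view. (Observation O: since at least ℓ ≥ 2 processes obtain min_view, any collection of views from n−1 distinct processes must include min_view.) -/
import Mathlib


/-- Observation O: with k < n-1 (so n-k ≥ 2), among the views
returned by any n-1 distinct processes, at least one equals `min_view`. -/
theorem kIS_observation_O
    (n k : ℕ) (Val : Type) [DecidableEq Val]
    (hn : 3 ≤ n) (hk : k < n - 1)
    (views : Fin n → Option (Finset (Fin n × Val)))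
    (minView : Finset (Fin n × Val))
    (hret : ∃ i₀, views i₀ = some minView)
    (hmin : ∀ i w, views i = some w → minView ⊆ w)
    -- Self-inclusion
    (hself : ∀ i vi, views i = some vi → ∃ v, (i, v) ∈ vi)
    -- Containment
    (hcont : ∀ i j vi vj, views i = some vi → views j = some vj →
      vi ⊆ vj ∨ vj ⊆ vi)
    -- Immediacy
    (himm : ∀ i j vi vj, views i = some vi → views j = some vj →
      (∃ v, (i, v) ∈ vj) → vi ⊆ vj)
    -- Output size
    (hsize : ∀ i w, views i = some w → n - k ≤ w.card)
    (huniq : ∀ i v v', (i, v) ∈ minView → (i, v') ∈ minView → v = v')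
    -- any n-1 processes all of which returned a view
    (T : Finset (Fin n)) (hT : T.card = n - 1)
    (hTdef : ∀ i ∈ T, (views i).isSome) :
    ∃ i ∈ T, views i = some minView := by
  obtain ⟨i₀, hi₀⟩ := hret
  -- support of minView
  set S : Finset (Fin n) := minView.image Prod.fst with hS
  have hScard : S.card = minView.card := by
    apply Finset.card_image_of_injOn
    intro a ha b hb hab
    have : a.2 = b.2 := by
      apply huniq a.1 a.2 b.2
      · simpa using ha
      · rw [hab]; simpa using hb
    exact Prod.ext hab this
  have hmv2 : 2 ≤ minView.card := by
    have := hsize i₀ minView hi₀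
    omega
  have hS2 : 2 ≤ S.card := by omega
  -- ∃ i ∈ S ∩ T
  have hodd : ∃ i ∈ S, i ∈ T := by
    by_contra h
    push_neg at h
    have hsub : S ⊆ Tᶜ := fun i hi => Finset.mem_compl.mpr (h i hi)
    have hcc : Tᶜ.card = 1 := by
      have := Finset.card_compl T
      simp [Fintype.card_fin] at this
      omega
    have := Finset.card_le_card hsub
    omega
  obtain ⟨i, hiS, hiT⟩ := hodd
  obtain ⟨⟨j, v⟩, hjv, hji⟩ := Finset.mem_image.mp hiS
  -- views i is defined
  obtain ⟨w, hw⟩ := Option.isSome_iff_exists.mp (hTdef i hiT)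
  refine ⟨i, hiT, ?_⟩
  rw [hw]
  congr 1
  apply Finset.Subset.antisymm
  · exact himm i i₀ w minView hw hi₀ ⟨v, by simp only [] at hji; exact hji ▸ hjv⟩
  · exact hmin i w hw
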